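/- arXiv:math/0606459 — 2 statements merged into one kernel-verified Lean document; each statement's English description precedes it below -/
import Mathlib

section
/- Let d ≥ 1 and p > d/2. There exists a constant c depending only on p and d such that for all w, z ∈ ℓ^p(Z^d), the convolution w ⋆ z defined by (w ⋆ z)_j = Σ_{k∈Z^d} w_{j-k} z_k satisfies ||w ⋆ z||_p ≤ c ||w||_p ||z||_p. -/
open scoped BigOperators ENNReal NNReal

/-- Euclidean norm of a lattice point in `ℤ^d`. -/
noncomputable def latNorm {d : ℕ} (j : Fin d → ℤ) : ℝ :=
  Real.sqrt (∑ i, ((j i : ℝ)) ^ 2)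

/-- Japanese bracket weight `⟨j⟩ = max(1, |j|)`. -/
noncomputable def bracket {d : ℕ} (j : Fin d → ℤ) : ℝ := max 1 (latNorm j)

/-- Weighted `ℓ^p`-norm `(Σ ⟨j⟩^{2p} |z_j|²)^{1/2}`. -/
noncomputable def wpNorm {d : ℕ} (p : ℝ) (z : (Fin d → ℤ) → ℂ) : ℝ :=
  Real.sqrt (∑' j : Fin d → ℤ, bracket j ^ (2 * p) * ‖z j‖ ^ 2)

/-- Convolution `(w ⋆ z)_j = Σ_k w_{j-k} z_k`. -/
noncomputable def latConv {d : ℕ} (w z : (Fin d → ℤ) → ℂ) : (Fin d → ℤ) → ℂ :=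
  fun j => ∑' k : Fin d → ℤ, w (j - k) * z k

lemma latNorm_nonneg {d : ℕ} (j : Fin d → ℤ) : 0 ≤ latNorm j := Real.sqrt_nonneg _

lemma one_le_bracket {d : ℕ} (j : Fin d → ℤ) : 1 ≤ bracket j := le_max_left _ _

lemma bracket_pos {d : ℕ} (j : Fin d → ℤ) : 0 < bracket j :=
  lt_of_lt_of_le one_pos (one_le_bracket j)

lemma latNorm_eq {d : ℕ} (j : Fin d → ℤ) :
    latNorm j = ‖(EuclideanSpace.equiv (Fin d) ℝ).symm (fun i => (j i : ℝ))‖ := by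
  rw [EuclideanSpace.norm_eq, latNorm]
  congr 1
  refine Finset.sum_congr rfl fun i _ => ?_
  simp [Real.norm_eq_abs, sq_abs]

lemma latNorm_add_le {d : ℕ} (a b : Fin d → ℤ) :
    latNorm (a + b) ≤ latNorm a + latNorm b := by
  rw [latNorm_eq, latNorm_eq, latNorm_eq]
  have : ((EuclideanSpace.equiv (Fin d) ℝ).symm (fun i => ((a + b) i : ℝ)))
      = (EuclideanSpace.equiv (Fin d) ℝ).symm (fun i => (a i : ℝ))
        + (EuclideanSpace.equiv (Fin d) ℝ).symm (fun i => (b i : ℝ)) := by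
    ext i; push_cast; simp
  rw [this]; exact norm_add_le _ _

lemma bracket_add_le {d : ℕ} (a b : Fin d → ℤ) :
    bracket (a + b) ≤ bracket a + bracket b := by
  unfold bracket
  refine max_le (le_add_of_le_of_nonneg (le_max_left _ _) (le_trans zero_le_one (le_max_left _ _))) ?_
  calc latNorm (a + b) ≤ latNorm a + latNorm b := latNorm_add_le a b
    _ ≤ max 1 (latNorm a) + max 1 (latNorm b) := by
        gcongr <;> exact le_max_right _ _

lemma abs_coord_le_latNorm {d : ℕ} (j : Fin d → ℤ) (i : Fin d) :
    |(j i : ℝ)| ≤ latNorm j := by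
  rw [latNorm, ← Real.sqrt_sq_eq_abs]
  apply Real.sqrt_le_sqrt
  exact Finset.single_le_sum (f := fun i => ((j i : ℝ))^2) (fun i _ => sq_nonneg _) (Finset.mem_univ i)

-- (A+B)^p ≤ 2^p (A^p + B^p) for A,B ≥ 0, p ≥ 0
lemma rpow_add_le_two_rpow {A B p : ℝ} (hA : 0 ≤ A) (hB : 0 ≤ B) (hp : 0 ≤ p) :
    (A + B) ^ p ≤ 2 ^ p * (A ^ p + B ^ p) := by
  rcases le_total A B with h | h
  · calc (A + B) ^ p ≤ (2 * B) ^ p := by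
          apply Real.rpow_le_rpow (by linarith) (by linarith) hp
      _ = 2 ^ p * B ^ p := Real.mul_rpow (by norm_num) hB
      _ ≤ 2 ^ p * (A ^ p + B ^ p) := by
          have h2 : (0:ℝ) ≤ 2 ^ p := Real.rpow_nonneg (by norm_num) p
          nlinarith [Real.rpow_nonneg hA p]
  · calc (A + B) ^ p ≤ (2 * A) ^ p := by
          apply Real.rpow_le_rpow (by linarith) (by linarith) hp
      _ = 2 ^ p * A ^ p := Real.mul_rpow (by norm_num) hA
      _ ≤ 2 ^ p * (A ^ p + B ^ p) := by
          have h2 : (0:ℝ) ≤ 2 ^ p := Real.rpow_nonneg (by norm_num) p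
          nlinarith [Real.rpow_nonneg hB p]

-- Peetre in real form
lemma bracket_rpow_peetre {d : ℕ} (j k : Fin d → ℤ) {p : ℝ} (hp : 0 ≤ p) :
    bracket j ^ p ≤ 2 ^ p * (bracket (j - k) ^ p + bracket k ^ p) := by
  have h1 : bracket j ≤ bracket (j - k) + bracket k := by
    have := bracket_add_le (j - k) k
    simpa using this
  calc bracket j ^ p ≤ (bracket (j - k) + bracket k) ^ p :=
        Real.rpow_le_rpow (bracket_pos j).le h1 hp
    _ ≤ 2 ^ p * (bracket (j - k) ^ p + bracket k ^ p) :=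
        rpow_add_le_two_rpow (bracket_pos _).le (bracket_pos _).le hp

-- Cauchy–Schwarz for ENNReal tsums over a countable discrete type
lemma ennreal_cs {ι : Type*} [Countable ι] [MeasurableSpace ι] [MeasurableSingletonClass ι]
    (f g : ι → ℝ≥0∞) :
    (∑' i, f i * g i) ^ 2 ≤ (∑' i, f i ^ 2) * (∑' i, g i ^ 2) := by
  have hconj : Real.HolderConjugate 2 2 := Real.HolderConjugate.two_two
  have H := ENNReal.lintegral_mul_le_Lp_mul_Lq MeasureTheory.Measure.count hconj
    (measurable_of_countable f).aemeasurable (measurable_of_countable g).aemeasurable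
  rw [MeasureTheory.lintegral_count, MeasureTheory.lintegral_count,
    MeasureTheory.lintegral_count] at H
  have hsq : ∀ h : ι → ℝ≥0∞, (∑' i, h i ^ (2:ℝ)) = ∑' i, h i ^ 2 := by
    intro h; refine tsum_congr fun i => ?_
    rw [← ENNReal.rpow_natCast (h i) 2]; norm_num
  calc (∑' i, f i * g i) ^ 2
      ≤ ((∑' i, f i ^ (2:ℝ)) ^ (1/(2:ℝ)) * (∑' i, g i ^ (2:ℝ)) ^ (1/(2:ℝ))) ^ 2 := by
        gcongr
        exact H
    _ = (∑' i, f i ^ 2) * (∑' i, g i ^ 2) := by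
        rw [mul_pow, ← ENNReal.rpow_natCast (_ ^ (1/(2:ℝ))) 2, ← ENNReal.rpow_natCast (_ ^ (1/(2:ℝ))) 2,
          ← ENNReal.rpow_mul, ← ENNReal.rpow_mul]
        norm_num [hsq f, hsq g]

lemma sq_rpow_half (x : ℝ≥0∞) : (x ^ ((1:ℝ)/2)) ^ 2 = x := by
  rw [← ENNReal.rpow_natCast _ 2, ← ENNReal.rpow_mul]; norm_num

lemma ennreal_young {ι : Type*} [Countable ι] [MeasurableSpace ι] [MeasurableSingletonClass ι]
    [AddCommGroup ι] (F h : ι → ℝ≥0∞) :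
    ∑' j, (∑' k, F (j - k) * h k) ^ 2 ≤ (∑' k, F k ^ 2) * (∑' k, h k) ^ 2 := by
  have step1 : ∀ j, (∑' k, F (j - k) * h k) ^ 2
      ≤ (∑' k, F (j - k) ^ 2 * h k) * (∑' k, h k) := by
    intro j
    have H := ennreal_cs (fun k => F (j - k) * h k ^ ((1:ℝ)/2)) (fun k => h k ^ ((1:ℝ)/2))
    calc (∑' k, F (j - k) * h k) ^ 2
        = (∑' k, (F (j - k) * h k ^ ((1:ℝ)/2)) * h k ^ ((1:ℝ)/2)) ^ 2 := by
          congr 1; refine tsum_congr fun k => ?_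
          rw [mul_assoc, ← sq, sq_rpow_half]
      _ ≤ (∑' k, (F (j - k) * h k ^ ((1:ℝ)/2)) ^ 2) * (∑' k, (h k ^ ((1:ℝ)/2)) ^ 2) := H
      _ = (∑' k, F (j - k) ^ 2 * h k) * (∑' k, h k) := by
          congr 1
          · refine tsum_congr fun k => ?_; rw [mul_pow, sq_rpow_half]
          · refine tsum_congr fun k => ?_; rw [sq_rpow_half]
  calc ∑' j, (∑' k, F (j - k) * h k) ^ 2
      ≤ ∑' j, (∑' k, F (j - k) ^ 2 * h k) * (∑' k, h k) := ENNReal.tsum_le_tsum step1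
    _ = (∑' j, ∑' k, F (j - k) ^ 2 * h k) * (∑' k, h k) := ENNReal.tsum_mul_right
    _ = (∑' k, ∑' j, F (j - k) ^ 2 * h k) * (∑' k, h k) := by rw [ENNReal.tsum_comm]
    _ = (∑' k, (∑' j, F (j - k) ^ 2) * h k) * (∑' k, h k) := by
        congr 1; exact tsum_congr fun k => ENNReal.tsum_mul_right
    _ = (∑' k, (∑' m, F m ^ 2) * h k) * (∑' k, h k) := by
        congr 1; refine tsum_congr fun k => ?_
        congr 1
        simpa using (Equiv.subRight k).tsum_eq (fun m => F m ^ 2)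
    _ = (∑' k, F k ^ 2) * (∑' k, h k) ^ 2 := by
        rw [ENNReal.tsum_mul_left]; ring

lemma summable_b1 {s : ℝ} (hs : 1 < s) :
    Summable (fun n : ℤ => (max 1 |(n:ℝ)|) ^ (-s)) := by
  have hg : Summable (fun n : ℤ => 1 / |(n:ℝ) + 0| ^ s) :=
    (Real.summable_one_div_int_add_rpow 0 s).mpr hs
  have he : Summable (fun n : ℤ => if n = 0 then (1:ℝ) else 0) :=
    summable_of_ne_finset_zero (s := {0}) (fun n hn => if_neg (by simpa using hn))
  refine Summable.of_nonneg_of_le (fun n => Real.rpow_nonneg (by positivity) _)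
    (fun n => ?_) (hg.add he)
  by_cases hn : n = 0
  · subst hn
    simp [Real.zero_rpow (show s ≠ 0 by linarith), Real.one_rpow]
  · have h1 : (1:ℝ) ≤ |(n:ℝ)| := by
      rw [← Int.cast_abs]
      exact_mod_cast Int.one_le_abs (show (n:ℤ) ≠ 0 from hn)
    rw [max_eq_right h1]
    simp only [add_zero, hn, if_false]
    rw [Real.rpow_neg (abs_nonneg _), one_div]

lemma tsum_pi_prod (G : ℤ → ℝ≥0∞) :
    ∀ d : ℕ, ∑' j : Fin d → ℤ, ∏ i, G (j i) = (∑' n : ℤ, G n) ^ d := by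
  intro d
  induction d with
  | zero =>
      simp only [Finset.univ_eq_empty, Finset.prod_empty, pow_zero]
      exact tsum_eq_single (default : Fin 0 → ℤ) (fun b hb => absurd (Subsingleton.elim b default) hb)
  | succ n ih =>
      have he := (Fin.consEquiv (fun _ : Fin (n+1) => ℤ)).tsum_eq
        (fun j : Fin (n+1) → ℤ => ∏ i, G (j i))
      rw [← he, ENNReal.tsum_prod']
      have : ∀ (x : ℤ) (j' : Fin n → ℤ),
          (∏ i, G ((Fin.consEquiv (fun _ : Fin (n+1) => ℤ)) (x, j') i))
            = G x * ∏ i, G (j' i) := by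
        intro x j'
        simp [Fin.consEquiv, Fin.prod_univ_succ]
      calc ∑' (x : ℤ), ∑' (j' : Fin n → ℤ),
            ∏ i, G ((Fin.consEquiv (fun _ : Fin (n+1) => ℤ)) (x, j') i)
          = ∑' (x : ℤ), ∑' (j' : Fin n → ℤ), G x * ∏ i, G (j' i) := by
            refine tsum_congr fun x => tsum_congr fun j' => this x j'
        _ = ∑' (x : ℤ), G x * ∑' (j' : Fin n → ℤ), ∏ i, G (j' i) := by
            refine tsum_congr fun x => ENNReal.tsum_mul_left
        _ = (∑' n : ℤ, G n) ^ (n + 1) := by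
            rw [ih, ENNReal.tsum_mul_right, pow_succ, mul_comm]

lemma lattice_sum_ne_top (d : ℕ) (hd : 1 ≤ d) {p : ℝ} (hp : (d:ℝ)/2 < p) :
    ∑' j : Fin d → ℤ, ENNReal.ofReal (bracket j ^ (-(2*p))) ≠ ⊤ := by
  set s : ℝ := 2 * p / d with hs_def
  have hd0 : (0:ℝ) < d := by exact_mod_cast hd
  have hs : 1 < s := by
    rw [hs_def, lt_div_iff₀ hd0]
    linarith
  set G : ℤ → ℝ≥0∞ := fun n => ENNReal.ofReal ((max 1 |(n:ℝ)|) ^ (-s)) with hG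
  have hpoint : ∀ j : Fin d → ℤ,
      ENNReal.ofReal (bracket j ^ (-(2*p))) ≤ ∏ i, G (j i) := by
    intro j
    have hprodpos : (0:ℝ) < ∏ i, (max 1 |(j i : ℝ)|) :=
      Finset.prod_pos fun i _ => lt_of_lt_of_le one_pos (le_max_left _ _)
    have h1 : ∏ i, (max 1 |(j i : ℝ)|) ≤ bracket j ^ (d:ℕ) := by
      calc ∏ i, (max 1 |(j i : ℝ)|) ≤ ∏ _i : Fin d, bracket j :=
            Finset.prod_le_prod (fun i _ => by positivity)
              (fun i _ => max_le_max le_rfl (abs_coord_le_latNorm j i))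
        _ = bracket j ^ (d:ℕ) := by rw [Finset.prod_const, Finset.card_univ, Fintype.card_fin]
    have h2 : bracket j ^ (-(2*p)) ≤ (∏ i, (max 1 |(j i : ℝ)|)) ^ (-s) := by
      have := Real.rpow_le_rpow_of_nonpos hprodpos h1 (show -s ≤ 0 by linarith)
      calc bracket j ^ (-(2*p)) = (bracket j ^ (d:ℕ)) ^ (-s) := by
            rw [← Real.rpow_natCast (bracket j) d, ← Real.rpow_mul (bracket_pos j).le]
            congr 1
            rw [hs_def]; field_simp
        _ ≤ (∏ i, (max 1 |(j i : ℝ)|)) ^ (-s) := this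
    calc ENNReal.ofReal (bracket j ^ (-(2*p)))
        ≤ ENNReal.ofReal ((∏ i, (max 1 |(j i : ℝ)|)) ^ (-s)) := ENNReal.ofReal_le_ofReal h2
      _ = ENNReal.ofReal (∏ i, (max 1 |(j i : ℝ)|) ^ (-s)) := by
          rw [Real.finset_prod_rpow _ _ (fun i _ => by positivity)]
      _ = ∏ i, G (j i) := ENNReal.ofReal_prod_of_nonneg
          (fun i _ => Real.rpow_nonneg (by positivity) _)
  have hGsum : (∑' n : ℤ, G n) ≠ ⊤ := by
    rw [hG, ← ENNReal.ofReal_tsum_of_nonneg (fun n => Real.rpow_nonneg (by positivity) _)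
      (summable_b1 hs)]
    exact ENNReal.ofReal_ne_top
  refine ne_top_of_le_ne_top ?_ (ENNReal.tsum_le_tsum hpoint)
  rw [tsum_pi_prod]
  exact ENNReal.pow_ne_top hGsum

lemma conv_le {d : ℕ} (w z : (Fin d → ℤ) → ℂ) (j : Fin d → ℤ) :
    (‖latConv w z j‖₊ : ℝ≥0∞) ≤ ∑' k, (‖w (j - k)‖₊ : ℝ≥0∞) * (‖z k‖₊ : ℝ≥0∞) := by
  by_cases hs : Summable fun k : Fin d → ℤ => w (j - k) * z k
  · have hns : Summable fun k : Fin d → ℤ => ‖w (j - k) * z k‖ := hs.norm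
    have h1 : ‖latConv w z j‖ ≤ ∑' k, ‖w (j - k) * z k‖ := norm_tsum_le_tsum_norm hns
    calc (‖latConv w z j‖₊ : ℝ≥0∞) = ENNReal.ofReal ‖latConv w z j‖ :=
          (ofReal_norm _).symm
      _ ≤ ENNReal.ofReal (∑' k, ‖w (j - k) * z k‖) := ENNReal.ofReal_le_ofReal h1
      _ = ∑' k, ENNReal.ofReal ‖w (j - k) * z k‖ :=
          ENNReal.ofReal_tsum_of_nonneg (fun k => norm_nonneg _) hns
      _ = ∑' k, (‖w (j - k)‖₊ : ℝ≥0∞) * (‖z k‖₊ : ℝ≥0∞) := by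
          refine tsum_congr fun k => ?_
          rw [norm_mul, ENNReal.ofReal_mul (norm_nonneg _)]
          exact congrArg₂ (· * ·) (ofReal_norm _) (ofReal_norm _)
  · rw [latConv, tsum_eq_zero_of_not_summable hs]
    simp

lemma add_sq_le_four (x y : ℝ≥0∞) : (x + y) ^ 2 ≤ 4 * (x ^ 2 + y ^ 2) := by
  rcases le_total x y with h | h
  · calc (x + y)^2 ≤ (y + y)^2 := by gcongr
      _ = 4 * y^2 := by ring
      _ ≤ 4 * (x^2 + y^2) := by gcongr; exact le_add_self
  · calc (x + y)^2 ≤ (x + x)^2 := by gcongr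
      _ = 4 * x^2 := by ring
      _ ≤ 4 * (x^2 + y^2) := by gcongr; exact le_self_add

lemma core {d : ℕ} (hd : 1 ≤ d) {p : ℝ} (hp : (d:ℝ)/2 < p) (w z : (Fin d → ℤ) → ℂ) :
    ∑' j : Fin d → ℤ, ENNReal.ofReal (bracket j) ^ (2*p) * (‖latConv w z j‖₊ : ℝ≥0∞)^2
      ≤ (ENNReal.ofReal (2 ^ p))^2 * 8 * (∑' j : Fin d → ℤ, ENNReal.ofReal (bracket j ^ (-(2*p))))
        * (∑' j : Fin d → ℤ, ENNReal.ofReal (bracket j) ^ (2*p) * (‖w j‖₊:ℝ≥0∞)^2)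
        * (∑' j : Fin d → ℤ, ENNReal.ofReal (bracket j) ^ (2*p) * (‖z j‖₊:ℝ≥0∞)^2) := by
  have hd0 : (0:ℝ) < d := by exact_mod_cast hd
  have hp0 : 0 < p := lt_of_le_of_lt (by positivity) hp
  set a : (Fin d → ℤ) → ℝ≥0∞ := fun j => ENNReal.ofReal (bracket j ^ p) with ha
  have ha_eq : ∀ j, a j = ENNReal.ofReal (bracket j) ^ p := fun j =>
    (ENNReal.ofReal_rpow_of_pos (bracket_pos j)).symm
  have ha_sq : ∀ j, a j ^ 2 = ENNReal.ofReal (bracket j) ^ (2*p) := by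
    intro j
    rw [ha_eq, ← ENNReal.rpow_natCast (_ ^ p) 2, ← ENNReal.rpow_mul]
    norm_num [mul_comm]
  have ha_ne_zero : ∀ j, a j ≠ 0 := fun j => by
    simp only [ha, ne_eq, ENNReal.ofReal_eq_zero, not_le]
    exact Real.rpow_pos_of_pos (bracket_pos j) p
  have ha_ne_top : ∀ j, a j ≠ ⊤ := fun j => ENNReal.ofReal_ne_top
  set W : (Fin d → ℤ) → ℝ≥0∞ := fun j => (‖w j‖₊ : ℝ≥0∞) with hW
  set Z : (Fin d → ℤ) → ℝ≥0∞ := fun j => (‖z j‖₊ : ℝ≥0∞) with hZ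
  set S : ℝ≥0∞ := ∑' j : Fin d → ℤ, ENNReal.ofReal (bracket j ^ (-(2*p))) with hSdef
  set c2 : ℝ≥0∞ := ENNReal.ofReal (2 ^ p) with hc2
  -- inverse square of a sums to S
  have ha_inv_sq : ∀ j, (a j)⁻¹ ^ 2 = ENNReal.ofReal (bracket j ^ (-(2*p))) := by
    intro j
    rw [← ENNReal.rpow_natCast (a j)⁻¹ 2, ← ENNReal.rpow_neg_one (a j), ← ENNReal.rpow_mul,
      ha_eq, ← ENNReal.rpow_mul, ENNReal.ofReal_rpow_of_pos (bracket_pos j)]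
    norm_num
    ring_nf
  -- ℓ¹ Cauchy-Schwarz bound
  have l1_bound : ∀ (v : (Fin d → ℤ) → ℝ≥0∞),
      (∑' k, v k) ^ 2 ≤ S * ∑' k, (a k * v k) ^ 2 := by
    intro v
    have hv : ∀ k, v k = (a k)⁻¹ * (a k * v k) := by
      intro k
      rw [← mul_assoc, ENNReal.inv_mul_cancel (ha_ne_zero k) (ha_ne_top k), one_mul]
    calc (∑' k, v k) ^ 2 = (∑' k, (a k)⁻¹ * (a k * v k)) ^ 2 := by
          congr 1; exact tsum_congr hv
      _ ≤ (∑' k, (a k)⁻¹ ^ 2) * ∑' k, (a k * v k) ^ 2 := ennreal_cs _ _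
      _ = S * ∑' k, (a k * v k) ^ 2 := by
          congr 1
          exact tsum_congr ha_inv_sq
  -- Peetre in ENNReal
  have peetre : ∀ j k : Fin d → ℤ, a j ≤ c2 * (a (j - k) + a k) := by
    intro j k
    calc a j = ENNReal.ofReal (bracket j ^ p) := rfl
      _ ≤ ENNReal.ofReal (2 ^ p * (bracket (j - k) ^ p + bracket k ^ p)) :=
          ENNReal.ofReal_le_ofReal (bracket_rpow_peetre j k hp0.le)
      _ = c2 * (a (j - k) + a k) := by
          rw [ENNReal.ofReal_mul (by positivity),
            ENNReal.ofReal_add (Real.rpow_nonneg (bracket_pos _).le p)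
              (Real.rpow_nonneg (bracket_pos _).le p)]
  set G1 : (Fin d → ℤ) → ℝ≥0∞ := fun j => ∑' k, (a (j - k) * W (j - k)) * Z k with hG1
  set G2 : (Fin d → ℤ) → ℝ≥0∞ := fun j => ∑' k, (a (j - k) * Z (j - k)) * W k with hG2
  have step1 : ∀ j, a j * (‖latConv w z j‖₊ : ℝ≥0∞) ≤ c2 * (G1 j + G2 j) := by
    intro j
    calc a j * (‖latConv w z j‖₊ : ℝ≥0∞)
        ≤ a j * ∑' k, W (j - k) * Z k := by gcongr; exact conv_le w z j
      _ = ∑' k, a j * (W (j - k) * Z k) := ENNReal.tsum_mul_left.symm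
      _ ≤ ∑' k, (c2 * (a (j - k) + a k)) * (W (j - k) * Z k) := by
          refine ENNReal.tsum_le_tsum fun k => ?_
          gcongr
          exact peetre j k
      _ = ∑' k, c2 * ((a (j - k) * W (j - k)) * Z k + W (j - k) * (a k * Z k)) := by
          refine tsum_congr fun k => by ring
      _ = c2 * (G1 j + ∑' k, W (j - k) * (a k * Z k)) := by
          rw [ENNReal.tsum_mul_left, ENNReal.tsum_add]
      _ = c2 * (G1 j + G2 j) := by
          congr 2
          rw [hG2]
          have := (Equiv.subLeft j).tsum_eq (fun k => W (j - k) * (a k * Z k))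
          rw [← this]
          refine tsum_congr fun k => ?_
          simp only [Equiv.subLeft_apply, sub_sub_cancel]
          ring
  -- Young for G1 and G2
  have young1 : ∑' j, G1 j ^ 2 ≤ (∑' k, (a k * W k) ^ 2) * (∑' k, Z k) ^ 2 :=
    ennreal_young (fun k => a k * W k) Z
  have young2 : ∑' j, G2 j ^ 2 ≤ (∑' k, (a k * Z k) ^ 2) * (∑' k, W k) ^ 2 :=
    ennreal_young (fun k => a k * Z k) W
  set Aw : ℝ≥0∞ := ∑' k, (a k * W k) ^ 2 with hAw
  set Az : ℝ≥0∞ := ∑' k, (a k * Z k) ^ 2 with hAz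
  have main : ∑' j, (a j * (‖latConv w z j‖₊ : ℝ≥0∞)) ^ 2 ≤ c2^2 * 8 * S * Aw * Az := by
    calc ∑' j, (a j * (‖latConv w z j‖₊ : ℝ≥0∞)) ^ 2
        ≤ ∑' j, (c2 * (G1 j + G2 j)) ^ 2 := by
          exact ENNReal.tsum_le_tsum fun j => pow_le_pow_left₀ (zero_le (a := _)) (step1 j) 2
      _ = c2^2 * ∑' j, (G1 j + G2 j) ^ 2 := by
          rw [← ENNReal.tsum_mul_left]
          exact tsum_congr fun j => by ring
      _ ≤ c2^2 * ∑' j, 4 * (G1 j ^ 2 + G2 j ^ 2) :=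
          mul_le_mul_right (ENNReal.tsum_le_tsum fun j => add_sq_le_four _ _) _
      _ = c2^2 * (4 * ((∑' j, G1 j ^ 2) + ∑' j, G2 j ^ 2)) := by
          rw [ENNReal.tsum_mul_left, ENNReal.tsum_add]
      _ ≤ c2^2 * (4 * ((Aw * (∑' k, Z k)^2) + Az * (∑' k, W k)^2)) :=
          mul_le_mul_right (mul_le_mul_right (add_le_add young1 young2) _) _
      _ ≤ c2^2 * (4 * ((Aw * (S * Az)) + Az * (S * Aw))) :=
          mul_le_mul_right (mul_le_mul_right
            (add_le_add (mul_le_mul_right (l1_bound Z) _)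
              (mul_le_mul_right (l1_bound W) _)) _) _
      _ = c2^2 * 8 * S * Aw * Az := by ring
  calc ∑' j : Fin d → ℤ, ENNReal.ofReal (bracket j) ^ (2*p) * (‖latConv w z j‖₊ : ℝ≥0∞)^2
      = ∑' j, (a j * (‖latConv w z j‖₊ : ℝ≥0∞)) ^ 2 := by
        refine tsum_congr fun j => ?_
        rw [mul_pow, ha_sq]
    _ ≤ c2^2 * 8 * S * Aw * Az := main
    _ = c2^2 * 8 * S * (∑' j : Fin d → ℤ, ENNReal.ofReal (bracket j) ^ (2*p) * (‖w j‖₊:ℝ≥0∞)^2)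
        * (∑' j : Fin d → ℤ, ENNReal.ofReal (bracket j) ^ (2*p) * (‖z j‖₊:ℝ≥0∞)^2) := by
        congr 1
        · congr 1
          rw [hAw]
          exact tsum_congr fun j => by rw [mul_pow, ha_sq]
        · rw [hAz]
          exact tsum_congr fun j => by rw [mul_pow, ha_sq]

lemma term_ofReal {d : ℕ} (p : ℝ) (f : (Fin d → ℤ) → ℂ) (j : Fin d → ℤ) :
    ENNReal.ofReal (bracket j ^ (2*p) * ‖f j‖ ^ 2)
      = ENNReal.ofReal (bracket j) ^ (2*p) * (‖f j‖₊ : ℝ≥0∞) ^ 2 := by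
  rw [ENNReal.ofReal_mul (Real.rpow_nonneg (bracket_pos j).le _),
    ENNReal.ofReal_rpow_of_pos (bracket_pos j)]
  congr 1
  rw [ENNReal.ofReal_pow (norm_nonneg _)]; exact congrArg (· ^ 2) (ofReal_norm _)

lemma term_ne_top {d : ℕ} {p : ℝ} (hp : 0 ≤ p) (f : (Fin d → ℤ) → ℂ) (j : Fin d → ℤ) :
    ENNReal.ofReal (bracket j) ^ (2*p) * (‖f j‖₊ : ℝ≥0∞) ^ 2 ≠ ⊤ := by
  apply ENNReal.mul_ne_top
  · exact ENNReal.rpow_ne_top_of_nonneg (by linarith) ENNReal.ofReal_ne_top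
  · exact ENNReal.pow_ne_top ENNReal.coe_ne_top

lemma term_toReal {d : ℕ} (p : ℝ) (f : (Fin d → ℤ) → ℂ) (j : Fin d → ℤ) :
    (ENNReal.ofReal (bracket j) ^ (2*p) * (‖f j‖₊ : ℝ≥0∞) ^ 2).toReal
      = bracket j ^ (2*p) * ‖f j‖ ^ 2 := by
  rw [← term_ofReal, ENNReal.toReal_ofReal (mul_nonneg (Real.rpow_nonneg (bracket_pos j).le _) (sq_nonneg _))]

/-- for `p > d/2` the weighted space `ℓ^p(ℤ^d)` is a Banach algebra
under convolution: `||w ⋆ z||_p ≤ c ||w||_p ||z||_p`. -/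
theorem stmt2 (d : ℕ) (hd : 1 ≤ d) (p : ℝ) (hp : (d : ℝ) / 2 < p) :
    ∃ c : ℝ, 0 < c ∧ ∀ w z : (Fin d → ℤ) → ℂ,
      Summable (fun j : Fin d → ℤ => bracket j ^ (2 * p) * ‖w j‖ ^ 2) →
      Summable (fun j : Fin d → ℤ => bracket j ^ (2 * p) * ‖z j‖ ^ 2) →
      Summable (fun j : Fin d → ℤ => bracket j ^ (2 * p) * ‖latConv w z j‖ ^ 2) ∧
      wpNorm p (latConv w z) ≤ c * wpNorm p w * wpNorm p z := by
  set K : ℝ≥0∞ := (ENNReal.ofReal (2 ^ p))^2 * 8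
    * (∑' j : Fin d → ℤ, ENNReal.ofReal (bracket j ^ (-(2*p)))) with hK
  have hKtop : K ≠ ⊤ := by
    apply ENNReal.mul_ne_top
    · exact ENNReal.mul_ne_top (ENNReal.pow_ne_top ENNReal.ofReal_ne_top) (by simp)
    · exact lattice_sum_ne_top d hd hp
  refine ⟨max 1 (Real.sqrt K.toReal), lt_of_lt_of_le one_pos (le_max_left _ _), ?_⟩
  have hp0 : (0:ℝ) ≤ p := le_of_lt (lt_of_le_of_lt (by positivity) hp)
  intro w z hw hz
  set Aw : ℝ≥0∞ := ∑' j : Fin d → ℤ, ENNReal.ofReal (bracket j) ^ (2*p) * (‖w j‖₊:ℝ≥0∞)^2 with hAw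
  set Az : ℝ≥0∞ := ∑' j : Fin d → ℤ, ENNReal.ofReal (bracket j) ^ (2*p) * (‖z j‖₊:ℝ≥0∞)^2 with hAz
  set T : ℝ≥0∞ := ∑' j : Fin d → ℤ,
    ENNReal.ofReal (bracket j) ^ (2*p) * (‖latConv w z j‖₊:ℝ≥0∞)^2 with hT
  have hAw_eq : Aw = ENNReal.ofReal (∑' j : Fin d → ℤ,
      bracket j ^ (2*p) * ‖w j‖ ^ 2) := by
    rw [ENNReal.ofReal_tsum_of_nonneg (fun j => mul_nonneg (Real.rpow_nonneg (bracket_pos j).le _) (sq_nonneg _)) hw]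
    exact tsum_congr fun j => (term_ofReal p w j).symm
  have hAz_eq : Az = ENNReal.ofReal (∑' j : Fin d → ℤ,
      bracket j ^ (2*p) * ‖z j‖ ^ 2) := by
    rw [ENNReal.ofReal_tsum_of_nonneg (fun j => mul_nonneg (Real.rpow_nonneg (bracket_pos j).le _) (sq_nonneg _)) hz]
    exact tsum_congr fun j => (term_ofReal p z j).symm
  have hAw_top : Aw ≠ ⊤ := by rw [hAw_eq]; exact ENNReal.ofReal_ne_top
  have hAz_top : Az ≠ ⊤ := by rw [hAz_eq]; exact ENNReal.ofReal_ne_top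
  have hcore : T ≤ K * Aw * Az := core hd hp w z
  have hRHS_top : K * Aw * Az ≠ ⊤ :=
    ENNReal.mul_ne_top (ENNReal.mul_ne_top hKtop hAw_top) hAz_top
  have hT_top : T ≠ ⊤ := ne_top_of_le_ne_top hRHS_top hcore
  constructor
  · exact (ENNReal.summable_toReal hT_top).congr fun j => term_toReal p (latConv w z) j
  · have h1 : wpNorm p (latConv w z) = Real.sqrt T.toReal := by
      rw [wpNorm]
      congr 1
      rw [ENNReal.tsum_toReal_eq (fun j => term_ne_top hp0 (latConv w z) j)]
      exact tsum_congr fun j => (term_toReal p (latConv w z) j).symm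
    have h2 : wpNorm p w = Real.sqrt Aw.toReal := by
      rw [wpNorm, hAw_eq, ENNReal.toReal_ofReal (tsum_nonneg fun j => mul_nonneg (Real.rpow_nonneg (bracket_pos j).le _) (sq_nonneg _))]
    have h3 : wpNorm p z = Real.sqrt Az.toReal := by
      rw [wpNorm, hAz_eq, ENNReal.toReal_ofReal (tsum_nonneg fun j => mul_nonneg (Real.rpow_nonneg (bracket_pos j).le _) (sq_nonneg _))]
    rw [h1, h2, h3]
    calc Real.sqrt T.toReal ≤ Real.sqrt ((K * Aw * Az).toReal) :=
          Real.sqrt_le_sqrt (ENNReal.toReal_mono hRHS_top hcore)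
      _ = Real.sqrt K.toReal * Real.sqrt Aw.toReal * Real.sqrt Az.toReal := by
          rw [ENNReal.toReal_mul, ENNReal.toReal_mul, Real.sqrt_mul (by positivity),
            Real.sqrt_mul (by positivity)]
      _ ≤ max 1 (Real.sqrt K.toReal) * Real.sqrt Aw.toReal * Real.sqrt Az.toReal := by
          gcongr
          exact le_max_right _ _
end

section
/- Let ω ∈ ℝ^n satisfy the Diophantine-type condition |(k,ω)| ≥ α/K^{n+1} for all k ∈ Z^n with 0 < |k| ≤ K. Let g(x) = Σ_{0<|k|≤K} ĝ(k) e^{i(k,x)} be a trigonometric polynomial bounded by M on the strip D(s) = {|Im x| < s}. Then the unique solution F with F̂(0)=0 of (ω,∂_x)F = g, namely F(x) = Σ_{0<|k|≤K} ĝ(k)/(i(k,ω)) e^{i(k,x)}, satisfies sup_{D(s')} |F| ≤ C α^{-1} K^{n+1} M Σ_{k∈Z^n} e^{-(s-s')|k|} for 0 < s' < s, with C depending only on n. -/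
open scoped BigOperators

/-- ℓ¹ norm of a lattice point `k ∈ ℤ^n`. -/
noncomputable def l1norm {n : ℕ} (k : Fin n → ℤ) : ℝ := ∑ i, |(k i : ℝ)|

lemma summable_exp_int (t : ℝ) (ht : 0 < t) :
    Summable fun k : ℤ => Real.exp (-t * |(k : ℝ)|) := by
  have hgeo : Summable fun m : ℕ => Real.exp (-t) ^ m :=
    summable_geometric_of_lt_one (Real.exp_pos _).le
      (Real.exp_lt_one_iff.mpr (by linarith))
  apply Summable.of_nat_of_neg
  · refine hgeo.congr fun m => ?_
    rw [← Real.exp_nat_mul]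
    push_cast
    rw [abs_of_nonneg (by positivity)]
    ring_nf
  · refine hgeo.congr fun m => ?_
    rw [← Real.exp_nat_mul]
    push_cast
    rw [abs_neg, abs_of_nonneg (by positivity)]
    ring_nf

lemma summable_exp_pi (n : ℕ) (t : ℝ) (ht : 0 < t) :
    Summable fun k : Fin n → ℤ => Real.exp (-t * ∑ i, |(k i : ℝ)|) := by
  induction n with
  | zero => exact Summable.of_finite
  | succ n ih =>
    have h := (summable_exp_int t ht).mul_of_nonneg ih
      (fun _ => (Real.exp_pos _).le) (fun _ => (Real.exp_pos _).le)
    have := h.comp_injective (Fin.consEquiv (fun _ : Fin (n+1) => ℤ)).symm.injective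
    refine this.congr fun k => ?_
    simp only [Function.comp, Fin.consEquiv_symm_apply]
    simp only [Fin.tail]
    rw [← Real.exp_add, Fin.sum_univ_succ]
    ring_nf

/-- small-divisor estimate for the truncated homological equation
`(ω,∂_x)F = g`. If `|(k,ω)| ≥ α/K^{n+1}` for `0 < |k| ≤ K` and `g` is a trigonometric
polynomial with modes `0 < |k| ≤ K` whose coefficients satisfy `|ĝ(k)| ≤ M e^{-s|k|}`,
then the solution `F = Σ ĝ(k)/(i(k,ω)) e^{i(k,x)}` satisfies
`sup_{D(s')} |F| ≤ C α⁻¹ K^{n+1} M Σ_k e^{-(s-s')|k|}`. -/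
theorem stmt10 (n : ℕ) (hn : 0 < n) :
    ∃ C : ℝ, 0 < C ∧
      ∀ (K : ℕ) (α s s' M : ℝ) (ω : Fin n → ℝ) (gh : (Fin n → ℤ) → ℂ),
        0 < K → 0 < α → 0 < s' → s' < s → 0 ≤ M →
        (∀ k : Fin n → ℤ, k ≠ 0 → l1norm k ≤ K →
          α / (K : ℝ) ^ (n + 1) ≤ |∑ i, (k i : ℝ) * ω i|) →
        (∀ k : Fin n → ℤ, ‖gh k‖ ≤ M * Real.exp (-s * l1norm k)) →
        (∀ k : Fin n → ℤ, (k = 0 ∨ (K : ℝ) < l1norm k) → gh k = 0) →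
        ∀ x : Fin n → ℂ, (∀ i, |(x i).im| < s') →
          ‖(∑' k : Fin n → ℤ,
              if k = 0 then 0 else
                gh k / (Complex.I * ∑ i, (k i : ℂ) * (ω i : ℂ)) *
                  Complex.exp (Complex.I * ∑ i, (k i : ℂ) * x i))‖ ≤
            C * α⁻¹ * (K : ℝ) ^ (n + 1) * M *
              ∑' k : Fin n → ℤ, Real.exp (-(s - s') * l1norm k) := by
  refine ⟨1, one_pos, ?_⟩
  intro K α s s' M ω gh hK hα hs' hss' hM hdio hcoef hsupp x hx
  set t := s - s' with htdef
  have ht : 0 < t := by simp [htdef]; linarith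
  have hg : Summable fun k : Fin n → ℤ => Real.exp (-t * l1norm k) := by
    simpa [l1norm] using summable_exp_pi n t ht
  set F : (Fin n → ℤ) → ℂ := fun k =>
    if k = 0 then 0 else
      gh k / (Complex.I * ∑ i, (k i : ℂ) * (ω i : ℂ)) *
        Complex.exp (Complex.I * ∑ i, (k i : ℂ) * x i) with hFdef
  set B : ℝ := α⁻¹ * (K : ℝ) ^ (n + 1) * M with hBdef
  have hKpow : (0:ℝ) < (K : ℝ) ^ (n + 1) := by positivity
  have hB : 0 ≤ B := by positivity
  -- bound on l1norm terms
  have hl1 : ∀ (k : Fin n → ℤ) (i : Fin n), |(k i : ℝ)| ≤ l1norm k := fun k i => by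
    unfold l1norm
    exact Finset.single_le_sum (f := fun j => |(k j : ℝ)|)
      (fun j _ => abs_nonneg _) (Finset.mem_univ i)
  -- per-term bound
  have hb : ∀ k : Fin n → ℤ, ‖F k‖ ≤ B * Real.exp (-t * l1norm k) := by
    intro k
    by_cases hk0 : k = 0
    · simp [hFdef, hk0]
      positivity
    by_cases hkK : (K : ℝ) < l1norm k
    · have := hsupp k (Or.inr hkK)
      simp [hFdef, hk0, this]
      positivity
    push_neg at hkK
    have hr := hdio k hk0 hkK
    have hrpos : 0 < α / (K : ℝ) ^ (n + 1) := by positivity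
    set r : ℝ := ∑ i, (k i : ℝ) * ω i with hrdef
    have hcast : (∑ i, (k i : ℂ) * (ω i : ℂ)) = (r : ℂ) := by
      rw [hrdef]; push_cast; ring
    have hL : 0 ≤ l1norm k := Finset.sum_nonneg fun i _ => abs_nonneg _
    have him : (Complex.I * ∑ i, (k i : ℂ) * x i).re = -∑ i, (k i : ℝ) * (x i).im := by
      simp [Complex.mul_re, Complex.im_sum, Complex.mul_im]
    have hexp : ‖Complex.exp (Complex.I * ∑ i, (k i : ℂ) * x i)‖
        ≤ Real.exp (s' * l1norm k) := by
      rw [Complex.norm_exp, him]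
      apply Real.exp_le_exp.mpr
      rw [l1norm, Finset.mul_sum, ← Finset.sum_neg_distrib]
      apply Finset.sum_le_sum
      intro i _
      calc -((k i : ℝ) * (x i).im) ≤ |(k i : ℝ) * (x i).im| := neg_le_abs _
        _ = |(k i : ℝ)| * |(x i).im| := abs_mul _ _
        _ ≤ |(k i : ℝ)| * s' := by
            apply mul_le_mul_of_nonneg_left (hx i).le (abs_nonneg _)
        _ = s' * |(k i : ℝ)| := mul_comm _ _
    have hnorm_div : ‖gh k / (Complex.I * ∑ i, (k i : ℂ) * (ω i : ℂ))‖
        ≤ (M * Real.exp (-s * l1norm k)) * ((K : ℝ) ^ (n + 1) / α) := by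
      rw [hcast, norm_div, norm_mul,
        Complex.norm_I, Complex.norm_real, Real.norm_eq_abs, one_mul]
      rw [div_le_iff₀ (lt_of_lt_of_le hrpos hr)]
      have hone : (1:ℝ) ≤ (K : ℝ) ^ (n + 1) / α * |r| := by
        calc (1:ℝ) = (K : ℝ) ^ (n + 1) / α * (α / (K : ℝ) ^ (n + 1)) := by field_simp
          _ ≤ (K : ℝ) ^ (n + 1) / α * |r| := by gcongr
      calc ‖gh k‖ ≤ M * Real.exp (-s * l1norm k) := hcoef k
        _ = M * Real.exp (-s * l1norm k) * 1 := (mul_one _).symm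
        _ ≤ M * Real.exp (-s * l1norm k) * ((K : ℝ) ^ (n + 1) / α * |r|) := by
            gcongr
        _ = M * Real.exp (-s * l1norm k) * ((K : ℝ) ^ (n + 1) / α) * |r| := by ring
    calc ‖F k‖ = ‖gh k / (Complex.I * ∑ i, (k i : ℂ) * (ω i : ℂ))‖ *
          ‖Complex.exp (Complex.I * ∑ i, (k i : ℂ) * x i)‖ := by
          simp [hFdef, hk0]
      _ ≤ ((M * Real.exp (-s * l1norm k)) * ((K : ℝ) ^ (n + 1) / α)) *
          Real.exp (s' * l1norm k) := by
          apply mul_le_mul hnorm_div hexp (norm_nonneg _)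
          positivity
      _ = B * Real.exp (-t * l1norm k) := by
          rw [hBdef, htdef,
            show -(s - s') * l1norm k = -s * l1norm k + s' * l1norm k by ring,
            Real.exp_add]
          field_simp
  -- summability of F via finite support
  have hfin : (Set.univ.pi fun _ : Fin n => Set.Icc (-(K:ℤ)) K).Finite :=
    Set.Finite.pi fun _ => Set.finite_Icc _ _
  have hFsupp : Function.support F ⊆ Set.univ.pi fun _ : Fin n => Set.Icc (-(K:ℤ)) K := by
    intro k hk
    simp only [Set.mem_pi, Set.mem_univ, Set.mem_Icc, forall_true_left]
    intro i
    by_contra hcon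
    push_neg at hcon
    have hZ : (K:ℤ) < |k i| := by
      rcases le_or_gt (-(K:ℤ)) (k i) with h | h
      · calc (K:ℤ) < k i := hcon h
          _ ≤ |k i| := le_abs_self _
      · calc (K:ℤ) < -(k i) := by linarith
          _ ≤ |k i| := neg_le_abs _
    have habs : (K : ℝ) < |(k i : ℝ)| := by
      rw [← Int.cast_abs]
      exact_mod_cast hZ
    have : (K : ℝ) < l1norm k := lt_of_lt_of_le habs (hl1 k i)
    have hgh0 := hsupp k (Or.inr this)
    apply hk
    by_cases hk0 : k = 0 <;> simp [hFdef, hk0, hgh0]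
  have hF : Summable F := summable_of_finite_support (hfin.subset hFsupp)
  -- final estimate
  calc ‖∑' k, F k‖ ≤ ∑' k, ‖F k‖ := norm_tsum_le_tsum_norm hF.norm
    _ ≤ ∑' k, B * Real.exp (-t * l1norm k) := Summable.tsum_le_tsum hb hF.norm (hg.mul_left B)
    _ = B * ∑' k, Real.exp (-t * l1norm k) := tsum_mul_left
    _ = 1 * α⁻¹ * (K : ℝ) ^ (n + 1) * M * ∑' k, Real.exp (-(s - s') * l1norm k) := by
        rw [hBdef, htdef]; ring
end
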